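/- Let ψ(x) = B₀x + b₀ + φ(x) with φ Lipschitz with constant L < σ_min(B₀), x* the zero of ψ, and γ > 0, λ ∈ (0,1). Then for all x with ψ(x) ≠ 0: γ⟨x − x*, B₀ᵀψ(x)⟩ / ‖γB₀ᵀψ(x)‖^{1−λ} ≥ (γ^λ / (2‖B₀‖^{1−λ})) (σ_min(B₀) − L)^{1+λ} ‖x − x*‖^{1+λ}. -/

import Mathlib

set_option maxHeartbeats 1000000
set_option synthInstance.maxHeartbeats 400000


noncomputable def mApp {n : ℕ} (B : Matrix (Fin n) (Fin n) ℝ) (x : EuclideanSpace ℝ (Fin n)) :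
    EuclideanSpace ℝ (Fin n) := Matrix.toEuclideanCLM (𝕜 := ℝ) B x

noncomputable def specNorm {n : ℕ} (B : Matrix (Fin n) (Fin n) ℝ) : ℝ :=
  ‖Matrix.toEuclideanCLM (𝕜 := ℝ) B‖

noncomputable def sigmaMin {n : ℕ} (B : Matrix (Fin n) (Fin n) ℝ) : ℝ :=
  sInf {r : ℝ | ∃ v : EuclideanSpace ℝ (Fin n), ‖v‖ = 1 ∧ r = ‖mApp B v‖}

def vabs {n : ℕ} (v : EuclideanSpace ℝ (Fin n)) : EuclideanSpace ℝ (Fin n) := WithLp.toLp 2 (fun i => |v i|)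

lemma sigmaMin_mul_norm_le {n : ℕ} (B : Matrix (Fin n) (Fin n) ℝ)
    (v : EuclideanSpace ℝ (Fin n)) : sigmaMin B * ‖v‖ ≤ ‖mApp B v‖ := by
  rcases eq_or_ne v 0 with rfl | hv
  · simp [mApp]
  · have hvn : (0:ℝ) < ‖v‖ := norm_pos_iff.mpr hv
    set u : EuclideanSpace ℝ (Fin n) := ‖v‖⁻¹ • v with hu
    have hun : ‖u‖ = 1 := by
      rw [hu, norm_smul]
      simp [abs_of_pos (inv_pos.mpr hvn), inv_mul_cancel₀ hvn.ne']
    have hbdd : BddBelow {r : ℝ | ∃ w : EuclideanSpace ℝ (Fin n), ‖w‖ = 1 ∧ r = ‖mApp B w‖} := by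
      refine ⟨0, ?_⟩
      rintro r ⟨w, -, rfl⟩
      exact norm_nonneg _
    have h1 : sigmaMin B ≤ ‖mApp B u‖ := csInf_le hbdd ⟨u, hun, rfl⟩
    have h2 : ‖mApp B u‖ = ‖v‖⁻¹ * ‖mApp B v‖ := by
      rw [hu]
      simp [mApp, map_smul, norm_smul, abs_of_pos (inv_pos.mpr hvn)]
    rw [h2] at h1
    calc sigmaMin B * ‖v‖ ≤ (‖v‖⁻¹ * ‖mApp B v‖) * ‖v‖ :=
          mul_le_mul_of_nonneg_right h1 hvn.le
      _ = ‖mApp B v‖ := by field_simp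

lemma transpose_eq_star {n : ℕ} (B : Matrix (Fin n) (Fin n) ℝ) : B.transpose = star B := by
  ext i j
  simp [Matrix.star_eq_conjTranspose, Matrix.conjTranspose_apply]

lemma mApp_transpose_inner {n : ℕ} (B : Matrix (Fin n) (Fin n) ℝ)
    (y z : EuclideanSpace ℝ (Fin n)) :
    (inner ℝ y (mApp B.transpose z) : ℝ) = inner ℝ (mApp B y) z := by
  rw [transpose_eq_star]
  show (inner ℝ y ((Matrix.toEuclideanCLM (𝕜 := ℝ) (star B)) z) : ℝ) = _
  rw [map_star, ContinuousLinearMap.star_eq_adjoint]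
  exact ContinuousLinearMap.adjoint_inner_right _ y z

lemma norm_mApp_transpose_le {n : ℕ} (B : Matrix (Fin n) (Fin n) ℝ)
    (z : EuclideanSpace ℝ (Fin n)) : ‖mApp B.transpose z‖ ≤ specNorm B * ‖z‖ := by
  have h := (Matrix.toEuclideanCLM (𝕜 := ℝ) B.transpose).le_opNorm z
  have h2 : ‖Matrix.toEuclideanCLM (𝕜 := ℝ) B.transpose‖ = specNorm B := by
    rw [transpose_eq_star, map_star, ContinuousLinearMap.star_eq_adjoint]
    rw [show ‖ContinuousLinearMap.adjoint (Matrix.toEuclideanCLM (𝕜 := ℝ) B)‖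
        = ‖Matrix.toEuclideanCLM (𝕜 := ℝ) B‖ from
      LinearIsometryEquiv.norm_map ContinuousLinearMap.adjoint _]
    rfl
  rw [h2] at h
  exact h

theorem stmt_19 {n : ℕ} (B₀ : Matrix (Fin n) (Fin n) ℝ) (b₀ : EuclideanSpace ℝ (Fin n))
    (φ : EuclideanSpace ℝ (Fin n) → EuclideanSpace ℝ (Fin n)) (L : ℝ)
    (hφ : ∀ x y, ‖φ x - φ y‖ ≤ L * ‖x - y‖) (hσ : L < sigmaMin B₀)
    (ψ : EuclideanSpace ℝ (Fin n) → EuclideanSpace ℝ (Fin n))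
    (hψ : ∀ x, ψ x = mApp B₀ x + b₀ + φ x)
    (xs : EuclideanSpace ℝ (Fin n)) (hxs : ψ xs = 0)
    (γ lam : ℝ) (hγ : 0 < γ) (hlam : 0 < lam) (hlam' : lam < 1) :
    ∀ x : EuclideanSpace ℝ (Fin n), ψ x ≠ 0 →
      γ * (inner ℝ (x - xs) (mApp B₀.transpose (ψ x)) : ℝ) / ‖γ • mApp B₀.transpose (ψ x)‖ ^ (1 - lam) ≥
        γ ^ lam / (2 * specNorm B₀ ^ (1 - lam)) * (sigmaMin B₀ - L) ^ (1 + lam) *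
          ‖x - xs‖ ^ (1 + lam) := by
  intro x hx
  set v := x - xs with hv
  set p := ψ x with hp
  set d := φ x - φ xs with hd
  -- decomposition p = B₀ v + d
  have hdecomp : p = mApp B₀ v + d := by
    have h1 := hψ x
    have h2 := hψ xs
    have : ψ x - ψ xs = mApp B₀ x - mApp B₀ xs + (φ x - φ xs) := by
      rw [h1, h2]; abel
    rw [hxs, sub_zero] at this
    have hmap : mApp B₀ x - mApp B₀ xs = mApp B₀ (x - xs) := by
      simp [mApp, map_sub]
    rw [hmap] at this
    rw [← hp, ← hv, ← hd] at this
    exact this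
  have hdn : ‖d‖ ≤ L * ‖v‖ := hφ x xs
  have hv0 : v ≠ 0 := by
    intro h
    apply hx
    have : x = xs := by rwa [hv, sub_eq_zero] at h
    rw [hp, this, hxs]
  have hvpos : (0:ℝ) < ‖v‖ := norm_pos_iff.mpr hv0
  have hL0 : 0 ≤ L := by
    nlinarith [norm_nonneg d]
  have hσL : 0 < sigmaMin B₀ - L := by linarith
  have hBv : sigmaMin B₀ * ‖v‖ ≤ ‖mApp B₀ v‖ := sigmaMin_mul_norm_le B₀ v
  have hppos : (0:ℝ) < ‖p‖ := norm_pos_iff.mpr hx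
  have hplow : (sigmaMin B₀ - L) * ‖v‖ ≤ ‖p‖ := by
    have h1 : ‖mApp B₀ v‖ - ‖d‖ ≤ ‖mApp B₀ v + d‖ := by
      simpa [sub_neg_eq_add] using norm_sub_norm_le (mApp B₀ v) (-d)
    rw [hdecomp]
    nlinarith
  -- ‖d‖ ≤ ‖mApp B₀ v‖
  have hdBv : ‖d‖ ≤ ‖mApp B₀ v‖ := by nlinarith
  -- inner product lower bound
  have hinner : (inner ℝ v (mApp B₀.transpose p) : ℝ) = inner ℝ (mApp B₀ v) p :=
    mApp_transpose_inner B₀ v p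
  have hkey : ‖p‖ ^ 2 / 2 ≤ (inner ℝ v (mApp B₀.transpose p) : ℝ) := by
    rw [hinner]
    have hsq : ‖mApp B₀ v - p‖ = ‖d‖ := by
      rw [hdecomp]; simp
    have hid := @norm_sub_sq_real (EuclideanSpace ℝ (Fin n)) _ _ (mApp B₀ v) p
    rw [hsq] at hid
    nlinarith [norm_nonneg d, norm_nonneg (mApp B₀ v)]
  set a : ℝ := (inner ℝ v (mApp B₀.transpose p) : ℝ) with ha
  have hapos : 0 < a := lt_of_lt_of_le (by positivity) hkey
  set w := mApp B₀.transpose p with hw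
  have hwle : ‖w‖ ≤ specNorm B₀ * ‖p‖ := norm_mApp_transpose_le B₀ p
  have hw0 : 0 < ‖w‖ := by
    rcases eq_or_ne w 0 with h | h
    · exfalso
      have : a = 0 := by rw [ha, h]; simp
      linarith
    · exact norm_pos_iff.mpr h
  have hS : 0 < specNorm B₀ := by nlinarith
  have hsm : ‖γ • w‖ = γ * ‖w‖ := by
    rw [norm_smul, Real.norm_eq_abs, abs_of_pos hγ]
  set S := specNorm B₀ with hSdef
  have h1lam : (0:ℝ) ≤ 1 - lam := by linarith
  have h1lam' : (0:ℝ) ≤ 1 + lam := by linarith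
  have e0 : (γ * (S * ‖p‖)) ^ (1 - lam)
      = γ ^ (1 - lam) * (S ^ (1 - lam) * ‖p‖ ^ (1 - lam)) := by
    rw [Real.mul_rpow hγ.le (by positivity), Real.mul_rpow hS.le hppos.le]
  have e1 : γ = γ ^ lam * γ ^ (1 - lam) := by
    rw [← Real.rpow_add hγ]; norm_num
  have e2 : ‖p‖ ^ (2:ℕ) = ‖p‖ ^ (1 + lam) * ‖p‖ ^ (1 - lam) := by
    rw [← Real.rpow_add hppos, ← Real.rpow_natCast ‖p‖ 2]; norm_num
  have hγne : γ ^ (1 - lam) ≠ 0 := by positivity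
  have hSne : S ^ (1 - lam) ≠ 0 := by positivity
  have hPne : ‖p‖ ^ (1 - lam) ≠ 0 := by positivity
  rw [ge_iff_le]
  calc γ ^ lam / (2 * S ^ (1 - lam)) * (sigmaMin B₀ - L) ^ (1 + lam) * ‖v‖ ^ (1 + lam)
      = γ ^ lam / (2 * S ^ (1 - lam)) * ((sigmaMin B₀ - L) * ‖v‖) ^ (1 + lam) := by
        rw [Real.mul_rpow hσL.le hvpos.le, mul_assoc]
    _ ≤ γ ^ lam / (2 * S ^ (1 - lam)) * ‖p‖ ^ (1 + lam) := by
        have := Real.rpow_le_rpow (by positivity) hplow h1lam'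
        have hc : (0:ℝ) ≤ γ ^ lam / (2 * S ^ (1 - lam)) := by positivity
        exact mul_le_mul_of_nonneg_left this hc
    _ = γ * (‖p‖ ^ 2 / 2) / (γ * (S * ‖p‖)) ^ (1 - lam) := by
        rw [e0]
        nth_rewrite 2 [e1]
        rw [e2]
        field_simp
    _ ≤ γ * a / (γ * (S * ‖p‖)) ^ (1 - lam) := by
        apply div_le_div_of_nonneg_right ?_ (by positivity)
        · exact mul_le_mul_of_nonneg_left hkey hγ.le
    _ ≤ γ * a / ‖γ • w‖ ^ (1 - lam) := by
        apply div_le_div_of_nonneg_left (by positivity) (by rw [hsm]; positivity)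
        apply Real.rpow_le_rpow (by rw [hsm]; positivity) ?_ h1lam
        rw [hsm]
        exact mul_le_mul_of_nonneg_left hwle hγ.le
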